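/- Let f̃ be a homogeneous polynomial over ℂ of degree d and Z = (x₀:y₀:0) a point on {f̃ = 0} ∩ {z = 0} with x₀² + y₀² ≠ 0. If (f̃_x)²(Z) + (f̃_y)²(Z) = 0, then either Z is a singular point of {f̃ = 0}, or the projective curve {f̃ = 0} is tangent to the line {z = 0} at Z. -/

import Mathlib

open MvPolynomial

lemma euler_monomial {n : ℕ} (s : Fin n →₀ ℕ) (a : ℂ) :
    ∑ i : Fin n, X i * pderiv i (monomial s a) =
      (∑ i : Fin n, s i) • monomial s a := by
  rw [Finset.sum_smul]
  refine Finset.sum_congr rfl fun i _ => ?_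
  rw [pderiv_monomial]
  rcases Nat.eq_zero_or_pos (s i) with h | h
  · simp [h]
  · rw [X, monomial_mul, one_mul]
    rw [add_tsub_cancel_of_le]
    · simp [smul_monomial, nsmul_eq_mul]
      ring
    · intro j
      simp only [Finsupp.single_apply]
      by_cases hij : i = j
      · subst hij; rw [if_pos rfl]; exact h
      · simp [hij]

lemma euler {d : ℕ} {f : MvPolynomial (Fin 3) ℂ} (hhom : f.IsHomogeneous d) :
    ∑ i : Fin 3, X i * pderiv i f = d • f := by
  nth_rewrite 1 [f.as_sum]
  simp only [map_sum, Finset.mul_sum]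
  rw [Finset.sum_comm]
  conv_rhs => rw [f.as_sum, Finset.smul_sum]
  refine Finset.sum_congr rfl fun s hs => ?_
  rw [euler_monomial s (coeff s f)]
  have hd : ∑ i : Fin 3, s i = d := by
    have := hhom (mem_support_iff.mp hs)
    rw [← this, Finsupp.weight_apply, Finsupp.sum_fintype]
    · simp
    · simp
  rw [hd]

theorem stmt_15 (d : ℕ) (f : MvPolynomial (Fin 3) ℂ)
    (hhom : f.IsHomogeneous d) (x₀ y₀ : ℂ)
    (hZ : MvPolynomial.eval ![x₀, y₀, 0] f = 0)
    (hiso : x₀^2 + y₀^2 ≠ 0)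
    (h1 : (MvPolynomial.eval ![x₀, y₀, 0] (MvPolynomial.pderiv 0 f))^2
        + (MvPolynomial.eval ![x₀, y₀, 0] (MvPolynomial.pderiv 1 f))^2 = 0) :
    (MvPolynomial.eval ![x₀, y₀, 0] (MvPolynomial.pderiv 0 f) = 0 ∧
     MvPolynomial.eval ![x₀, y₀, 0] (MvPolynomial.pderiv 1 f) = 0 ∧
     MvPolynomial.eval ![x₀, y₀, 0] (MvPolynomial.pderiv 2 f) = 0) ∨
    (MvPolynomial.eval ![x₀, y₀, 0] (MvPolynomial.pderiv 0 f) = 0 ∧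
     MvPolynomial.eval ![x₀, y₀, 0] (MvPolynomial.pderiv 1 f) = 0 ∧
     MvPolynomial.eval ![x₀, y₀, 0] (MvPolynomial.pderiv 2 f) ≠ 0) := by
  set a := MvPolynomial.eval ![x₀, y₀, 0] (MvPolynomial.pderiv 0 f) with ha
  set b := MvPolynomial.eval ![x₀, y₀, 0] (MvPolynomial.pderiv 1 f) with hb
  -- Euler relation evaluated at Z
  have heuler : x₀ * a + y₀ * b = 0 := by
    have := congrArg (MvPolynomial.eval ![x₀, y₀, 0]) (euler hhom)
    simp [Fin.sum_univ_three, hZ, ← ha, ← hb] at this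
    simpa using this
  have hab : a = 0 ∧ b = 0 := by
    have hfac : (a + Complex.I * b) * (a - Complex.I * b) = 0 := by
      have : a^2 + b^2 = 0 := h1
      ring_nf
      rw [Complex.I_sq]
      linear_combination this
    rcases mul_eq_zero.mp hfac with h | h
    · -- a = -I b
      have hA : a = -Complex.I * b := by linear_combination h
      rcases eq_or_ne b 0 with hb0 | hb0
      · constructor <;> simp [hA, hb0]
      · exfalso
        apply hiso
        have : (x₀ * (-Complex.I) + y₀) * b = 0 := by
          linear_combination heuler - x₀ * hA
        have hx : x₀ * (-Complex.I) + y₀ = 0 := by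
          rcases mul_eq_zero.mp this with h' | h'
          · exact h'
          · exact absurd h' hb0
        have hy : y₀ = x₀ * Complex.I := by linear_combination hx
        rw [hy]; ring_nf; rw [Complex.I_sq]; ring
    · have hA : a = Complex.I * b := by linear_combination h
      rcases eq_or_ne b 0 with hb0 | hb0
      · constructor <;> simp [hA, hb0]
      · exfalso
        apply hiso
        have : (x₀ * Complex.I + y₀) * b = 0 := by
          linear_combination heuler - x₀ * hA
        have hx : x₀ * Complex.I + y₀ = 0 := by
          rcases mul_eq_zero.mp this with h' | h'
          · exact h'
          · exact absurd h' hb0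
        have hy : y₀ = -(x₀ * Complex.I) := by linear_combination hx
        rw [hy]; ring_nf; rw [Complex.I_sq]; ring
  rcases eq_or_ne (MvPolynomial.eval ![x₀, y₀, 0] (MvPolynomial.pderiv 2 f)) 0 with hc | hc
  · exact Or.inl ⟨hab.1, hab.2, hc⟩
  · exact Or.inr ⟨hab.1, hab.2, hc⟩
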